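/- Let n ≥ 1 and let α, β be real numbers with α ≠ 0, and set η = β/α. For 0 ≤ k ≤ n and 0 ≤ ℓ ≤ n, define u_{k,ℓ} = Σ_{j=max(0,ℓ−k)}^{min(ℓ,n−k)} (−1)^{k+ℓ+j} η^{n−k−j} C(k, ℓ−j) C(n−k, j). Then for every k with 0 ≤ k ≤ n and every ℓ with 1 ≤ ℓ ≤ n−1, the three-term identity (n−ℓ+1)·u_{k,ℓ−1} + (k+ℓ−n + (k−ℓ)η)·u_{k,ℓ} + (ℓ+1)·η·u_{k,ℓ+1} = 0 holds. -/

import Mathlib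

open Polynomial Finset

private lemma aux_mul_deriv_pow (p : ℝ[X]) (m : ℕ) :
    p * derivative (p ^ m) = C (m : ℝ) * p ^ m * derivative p := by
  cases m with
  | zero => simp
  | succ m =>
    rw [derivative_pow]
    simp only [Nat.add_sub_cancel]
    ring

private lemma aux_poly_key (η : ℝ) (a k : ℕ) :
    (X + C η) * (X - 1) * derivative ((X + C η) ^ a * (X - 1) ^ k) =
      (C (a : ℝ) * (X - 1) + C (k : ℝ) * (X + C η)) * ((X + C η) ^ a * (X - 1) ^ k) := by
  rw [derivative_mul]
  have h1 := aux_mul_deriv_pow (X + C η) a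
  have h2 := aux_mul_deriv_pow (X - 1 : ℝ[X]) k
  have d1 : derivative (X + C η) = 1 := by simp
  have d2 : derivative (X - 1 : ℝ[X]) = 1 := by simp
  have e1 : (X + C η) * (X - 1) *
        (derivative ((X + C η) ^ a) * (X - 1) ^ k + (X + C η) ^ a * derivative ((X - 1) ^ k))
      = (X - 1) * (X - 1) ^ k * ((X + C η) * derivative ((X + C η) ^ a)) +
        (X + C η) * (X + C η) ^ a * ((X - 1) * derivative ((X - 1) ^ k)) := by ring
  rw [e1, h1, h2, d1, d2]
  ring

private lemma aux_coeff_xmul_deriv (p : ℝ[X]) (m : ℕ) :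
    (X * derivative p).coeff m = (m : ℝ) * p.coeff m := by
  cases m with
  | zero => simp
  | succ m => rw [coeff_X_mul, coeff_derivative]; push_cast; ring

private lemma aux_coeff_f (η : ℝ) (n k : ℕ) (hk : k ≤ n) (ℓ : ℕ) :
    (((X + C η) ^ (n - k) * (X - 1) ^ k : ℝ[X])).coeff ℓ =
      ∑ j ∈ Finset.Icc (ℓ - k) (min ℓ (n - k)),
        (-1 : ℝ) ^ (k + ℓ + j) * η ^ (n - k - j) *
          (Nat.choose k (ℓ - j) : ℝ) * (Nat.choose (n - k) j : ℝ) := by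
  have hsub : (X - 1 : ℝ[X]) = X + C (-1) := by simp [sub_eq_add_neg]
  rw [coeff_mul, Finset.Nat.sum_antidiagonal_eq_sum_range_succ_mk]
  rw [show (Finset.Icc (ℓ - k) (min ℓ (n - k))) = (Finset.range (ℓ+1)).filter
      (fun j => ℓ - k ≤ j ∧ j ≤ min ℓ (n - k)) from by
    ext j; simp [Finset.mem_Icc, Nat.lt_succ_iff]; omega]
  rw [Finset.sum_filter]
  refine Finset.sum_congr rfl fun j hj => ?_
  simp only [Finset.mem_range, Nat.lt_succ_iff] at hj
  rw [coeff_X_add_C_pow, hsub, coeff_X_add_C_pow]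
  by_cases h1 : ℓ - j ≤ k
  · by_cases h2 : j ≤ n - k
    · have hcond : (ℓ - k ≤ j ∧ j ≤ min ℓ (n - k)) := by omega
      rw [if_pos hcond]
      have hsign : ((-1 : ℝ)) ^ (k + ℓ + j) = (-1 : ℝ) ^ (k - (ℓ - j)) := by
        rw [show k + ℓ + j = (k - (ℓ - j)) + 2 * (ℓ - j) + 2 * j from by omega]
        simp [pow_add, pow_mul]
      rw [hsign]
      ring
    · rw [if_neg (by omega), Nat.choose_eq_zero_of_lt (show n - k < j by omega)]
      simp
  · rw [if_neg (by omega), Nat.choose_eq_zero_of_lt (show k < ℓ - j by omega)]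
    simp

/-- Interior-row three-term identity for the eigenvector components `u_{k,ℓ}`. -/
theorem stmt_5 (n : ℕ) (hn : 1 ≤ n) (α β : ℝ) (hα : α ≠ 0) (η : ℝ) (hη : η = β / α)
    (u : ℕ → ℕ → ℝ)
    (hu : u = fun k ℓ =>
      ∑ j ∈ Finset.Icc (ℓ - k) (min ℓ (n - k)),
        (-1 : ℝ) ^ (k + ℓ + j) * η ^ (n - k - j) *
          (Nat.choose k (ℓ - j) : ℝ) * (Nat.choose (n - k) j : ℝ))
    (k : ℕ) (hk : k ≤ n) (ℓ : ℕ) (hℓ1 : 1 ≤ ℓ) (hℓ2 : ℓ ≤ n - 1) :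
    ((n : ℝ) - ℓ + 1) * u k (ℓ - 1) +
      ((k : ℝ) + ℓ - n + ((k : ℝ) - ℓ) * η) * u k ℓ +
      ((ℓ : ℝ) + 1) * η * u k (ℓ + 1) = 0 := by
  obtain ⟨m, rfl⟩ : ∃ m, ℓ = m + 1 := ⟨ℓ - 1, by omega⟩
  set f : ℝ[X] := (X + C η) ^ (n - k) * (X - 1) ^ k with hf
  have hu' : ∀ i, u k i = f.coeff i := by
    intro i; rw [hu, aux_coeff_f η n k hk]
  have key := aux_poly_key η (n - k) k
  rw [← hf] at key
  -- rewrite LHS and RHS in a coeff-friendly form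
  have lhs_eq : (X + C η) * (X - 1) * derivative f
      = X * (X * derivative f) + C (η - 1) * (X * derivative f) + C (-η) * derivative f := by
    simp only [map_sub, map_neg, map_one]
    ring
  have rhs_eq : (C ((n - k : ℕ) : ℝ) * (X - 1) + C (k : ℝ) * (X + C η)) * f
      = C (n : ℝ) * (X * f) + C ((k : ℝ) * (1 + η) - n) * f := by
    have : ((n - k : ℕ) : ℝ) = (n : ℝ) - k := by
      rw [Nat.cast_sub hk]
    rw [this]
    simp only [map_sub, map_add, map_mul, map_one]
    ring
  have hcoeff := congrArg (fun p => p.coeff (m + 1)) key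
  simp only [lhs_eq, rhs_eq, coeff_add, coeff_C_mul, aux_coeff_xmul_deriv, coeff_X_mul,
    coeff_derivative] at hcoeff
  simp only [hu', show m + 1 - 1 = m from rfl]
  push_cast at hcoeff ⊢
  linear_combination -hcoeff
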